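/- For odd positive integers n, the group V_{8n} has exactly 2n + 3 conjugacy classes. -/

import Mathlib

/-- Defining relations of the group
`V_{8n} = ⟨a, b : a^{2n} = b⁴ = 1, ba = a⁻¹b⁻¹, b⁻¹a = a⁻¹b⟩`,
as elements of the free group on two generators. -/
def V8nRels (n : ℕ) : Set (FreeGroup (Fin 2)) :=
  {FreeGroup.of 0 ^ (2 * n), FreeGroup.of 1 ^ 4,
   FreeGroup.of 1 * FreeGroup.of 0 * FreeGroup.of 1 * FreeGroup.of 0,
   (FreeGroup.of 1)⁻¹ * FreeGroup.of 0 * (FreeGroup.of 1)⁻¹ * FreeGroup.of 0}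

/-- The group `V_{8n}` as a presented group. -/
abbrev V8n (n : ℕ) := PresentedGroup (V8nRels n)

/-- The generator `a` of `V_{8n}`. -/
def va (n : ℕ) : V8n n := PresentedGroup.of 0

/-- The generator `b` of `V_{8n}`. -/
def vb (n : ℕ) : V8n n := PresentedGroup.of 1

namespace V8
def pr (n : ℕ) : ZMod (2*n) →+* ZMod 2 := ZMod.castHom (Dvd.intro n rfl) _
def p4 : ZMod 4 →+* ZMod 2 := ZMod.castHom (by norm_num : (2:ℕ) ∣ 4) (ZMod 2)
def em : ZMod 2 → ZMod 4 := fun t => 2 * t.val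
def sg (n : ℕ) : ZMod 2 → ZMod (2*n) := fun t => if t = 0 then 1 else -1

variable {n : ℕ}

lemma two_cases : ∀ s : ZMod 2, s = 0 ∨ s = 1 := by decide
lemma em_add (s t : ZMod 2) : em (s + t) = em s + em t := by
  rcases two_cases s with h|h <;> rcases two_cases t with h'|h' <;> subst h h' <;> decide
@[simp] lemma p4_em (t : ZMod 2) : p4 (em t) = 0 := by
  rcases two_cases t with h|h <;> subst h <;> decide
@[simp] lemma em_two (t : ZMod 2) : em t + em t = 0 := by
  rcases two_cases t with h|h <;> subst h <;> decide
lemma em_neg (t : ZMod 2) : - em t = em t := by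
  rcases two_cases t with h|h <;> subst h <;> decide
@[simp] lemma em_zero : em 0 = 0 := rfl
@[simp] lemma neg2 (t : ZMod 2) : -t = t := by rcases two_cases t with h|h <;> subst h <;> decide
lemma sg_mul (s t : ZMod 2) : sg n s * sg n t = sg n (s + t) := by
  rcases two_cases s with h|h <;> rcases two_cases t with h'|h' <;> subst h h' <;>
    simp [sg, show (1:ZMod 2) ≠ 0 from by decide, show (1+1:ZMod 2) = 0 from by decide]
@[simp] lemma sg_zero : sg n 0 = 1 := rfl
@[simp] lemma pr_sg (t : ZMod 2) : pr n (sg n t) = 1 := by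
  rcases two_cases t with h|h <;> subst h <;> simp [sg, pr, map_one, map_neg] <;> decide
@[simp] lemma pr_sg_mul (t : ZMod 2) (k : ZMod (2*n)) : pr n (sg n t * k) = pr n k := by
  rw [map_mul, pr_sg, one_mul]

structure Gr (n : ℕ) where
  k : ZMod (2*n)
  l : ZMod 4

@[ext] lemma Gr.ext' {x y : Gr n} (h1 : x.k = y.k) (h2 : x.l = y.l) : x = y := by
  cases x; cases y; simp_all

instance : Mul (Gr n) := ⟨fun x y => ⟨x.k + sg n (p4 x.l) * y.k, x.l + y.l + em (p4 x.l * pr n y.k)⟩⟩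
instance : One (Gr n) := ⟨⟨0, 0⟩⟩
instance : Inv (Gr n) := ⟨fun x => ⟨-(sg n (p4 x.l) * x.k), -x.l + em (p4 x.l * pr n x.k)⟩⟩

@[simp] lemma mul_k (x y : Gr n) : (x*y).k = x.k + sg n (p4 x.l) * y.k := rfl
@[simp] lemma mul_l (x y : Gr n) : (x*y).l = x.l + y.l + em (p4 x.l * pr n y.k) := rfl
@[simp] lemma one_k : (1 : Gr n).k = 0 := rfl
@[simp] lemma one_l : (1 : Gr n).l = 0 := rfl
@[simp] lemma inv_k (x : Gr n) : (x⁻¹).k = -(sg n (p4 x.l) * x.k) := rfl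
@[simp] lemma inv_l (x : Gr n) : (x⁻¹).l = -x.l + em (p4 x.l * pr n x.k) := rfl

instance : Group (Gr n) where
  mul_assoc x y z := by
    ext
    · simp only [mul_k, mul_l, map_add, map_mul, p4_em, add_zero, ← sg_mul, pr_sg_mul]; ring
    · simp only [mul_l, mul_k, map_add, map_mul, p4_em, pr_sg, pr_sg_mul, add_mul, mul_add,
        add_zero, mul_one, one_mul, em_add]
      ring
  one_mul x := by ext <;> simp
  mul_one x := by ext <;> simp
  inv_mul_cancel x := by
    ext
    · simp [sg_mul]
    · simp only [mul_l, inv_l, inv_k, one_l, map_neg, map_add, map_mul, p4_em, neg2, add_zero,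
        pr_sg_mul]
      rw [show ∀ a b : ZMod 4, -a + b + a + b = b + b from fun a b => by ring, em_two]


section rels
variable {n : ℕ}
local notation "a" => va n
local notation "b" => vb n

lemma rel_one {r : FreeGroup (Fin 2)} (h : r ∈ V8nRels n) : PresentedGroup.mk (V8nRels n) r = 1 :=
  (QuotientGroup.eq_one_iff r).2 (Subgroup.subset_normalClosure h)

lemma r1 : a ^ (2*n) = 1 := by
  have := rel_one (n := n) (r := FreeGroup.of 0 ^ (2*n)) (by simp [V8nRels])
  simpa [va, PresentedGroup.of, map_pow] using this

lemma r2 : b ^ 4 = 1 := by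
  have := rel_one (n := n) (r := FreeGroup.of 1 ^ 4) (by simp [V8nRels])
  simpa [vb, PresentedGroup.of, map_pow] using this

lemma r3 : b * a * (b * a) = 1 := by
  have := rel_one (n := n)
    (r := FreeGroup.of 1 * FreeGroup.of 0 * FreeGroup.of 1 * FreeGroup.of 0)
    (by simp [V8nRels])
  simpa [va, vb, PresentedGroup.of, map_mul, mul_assoc] using this

lemma r4 : b⁻¹ * a * (b⁻¹ * a) = 1 := by
  have := rel_one (n := n)
    (r := (FreeGroup.of 1)⁻¹ * FreeGroup.of 0 * (FreeGroup.of 1)⁻¹ * FreeGroup.of 0)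
    (by simp [V8nRels])
  simpa [va, vb, PresentedGroup.of, map_mul, map_inv, mul_assoc] using this

lemma L1 : b * a = a⁻¹ * b⁻¹ := by
  have h := r3 (n := n)
  rw [← mul_inv_eq_one] at h ⊢
  calc b * a * (a⁻¹ * b⁻¹)⁻¹ = b * a * (b * a) := by group
  _ = 1 := r3

lemma L2 : b⁻¹ * a = a⁻¹ * b := by
  have h := r4 (n := n)
  calc b⁻¹ * a = b⁻¹ * a * (b⁻¹ * a) * (b⁻¹ * a)⁻¹ := by group
  _ = (b⁻¹ * a)⁻¹ := by rw [r4]; group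
  _ = a⁻¹ * b := by group

lemma L1' : b * a⁻¹ = a * b⁻¹ := by
  have h := L2 (n := n)
  calc b * a⁻¹ = b * (b⁻¹ * a)⁻¹ * ((b⁻¹)⁻¹)⁻¹:= by group
  _ = b * (a⁻¹ * b)⁻¹ * b⁻¹ := by rw [h]; group
  _ = a * b⁻¹ := by group

lemma L2' : b⁻¹ * a⁻¹ = a * b := by
  have h := L1 (n := n)
  calc b⁻¹ * a⁻¹ = b⁻¹ * (a⁻¹ * b⁻¹) * b := by group
  _ = b⁻¹ * (b * a) * b := by rw [h]
  _ = a * b := by group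

lemma bcentral : b * b * a = a * (b * b) := by
  calc b * b * a = b * (b * a) := by group
  _ = b * (a⁻¹ * b⁻¹) := by rw [L1]
  _ = (b * a⁻¹) * b⁻¹ := by group
  _ = a * b⁻¹ * b⁻¹ := by rw [L1']
  _ = a * (b⁻¹ * b⁻¹) := by group
  _ = a * (b * b) := by
      congr 1
      have h4 : b * b * (b * b) = 1 := by
        have := r2 (n := n)
        calc b * b * (b * b) = b ^ 4 := by rw [pow_succ, pow_succ, pow_succ, pow_one]; group
        _ = 1 := r2
      rw [← mul_inv_rev]
      exact inv_eq_of_mul_eq_one_left h4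

lemma key : ∀ m : ℕ, b * a ^ m = (a ^ m)⁻¹ * (if m % 2 = 0 then b else b⁻¹) := by
  intro m
  induction m with
  | zero => simp
  | succ m ih =>
    rcases Nat.even_or_odd m with he | ho
    · have hm : m % 2 = 0 := Nat.even_iff.1 he
      have hm1 : (m+1) % 2 = 1 := by omega
      rw [hm1, pow_succ, ← mul_assoc, ih, hm, if_pos rfl]
      simp only [if_neg (by norm_num : ¬ (1:ℕ) = 0)]
      rw [mul_assoc, L1]
      group
    · have hm : m % 2 = 1 := Nat.odd_iff.1 ho
      have hm1 : (m+1) % 2 = 0 := by omega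
      rw [hm1, pow_succ, ← mul_assoc, ih, hm]
      simp only [if_neg (by norm_num : ¬ (1:ℕ) = 0), if_pos rfl]
      rw [mul_assoc, L2]
      group
      simp

lemma b2key : ∀ m : ℕ, b * b * a ^ m = a ^ m * (b * b) := by
  intro m
  induction m with
  | zero => simp
  | succ m ih =>
    rw [pow_succ, ← mul_assoc, ih, mul_assoc, bcentral]
    group
end rels

section iso
variable {n : ℕ} [NeZero n]

instance : NeZero (2*n) := ⟨Nat.mul_ne_zero two_ne_zero (NeZero.ne n)⟩

local notation "a" => va n
local notation "b" => vb n

def AA : Gr n := ⟨1, 0⟩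
def BB : Gr n := ⟨0, 1⟩

lemma A_pow (m : ℕ) : (AA : Gr n) ^ m = ⟨(m : ZMod (2*n)), (0 : ZMod 4)⟩ := by
  induction m with
  | zero => ext <;> simp
  | succ m ih => rw [pow_succ, ih]; ext <;> simp [AA] <;> push_cast <;> ring

lemma B_pow (m : ℕ) : (BB : Gr n) ^ m = ⟨0, (m : ZMod 4)⟩ := by
  induction m with
  | zero => ext <;> simp
  | succ m ih => rw [pow_succ, ih]; ext <;> simp [BB] <;> push_cast <;> ring

@[simp] lemma p4_zero : p4 0 = 0 := rfl
@[simp] lemma p4_one : p4 1 = 1 := by decide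
@[simp] lemma p4_two : p4 2 = 0 := by decide
@[simp] lemma p4_three : p4 3 = 1 := by decide
@[simp] lemma em_one : em 1 = 2 := by decide
@[simp] lemma sg_one : sg n 1 = -1 := by simp [sg]
@[simp] lemma pr_neg_one : pr n (-1) = 1 := by rw [map_neg, map_one, neg2]

lemma four_cases : ∀ j : ZMod 4, j = 0 ∨ j = 1 ∨ j = 2 ∨ j = 3 := by decide

lemma pr_val (k : ZMod (2*n)) : pr n k = ((k.val : ℕ) : ZMod 2) := by
  conv_lhs => rw [← ZMod.natCast_zmod_val k]
  rw [map_natCast]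

lemma p4_val (l : ZMod 4) : p4 l = ((l.val : ℕ) : ZMod 2) := by
  conv_lhs => rw [← ZMod.natCast_zmod_val l]
  rw [map_natCast]

lemma φrels : ∀ r ∈ V8nRels n, FreeGroup.lift ![(AA : Gr n), BB] r = 1 := by
  intro r hr
  rcases hr with h | h | h | h <;> subst h <;>
    simp only [map_pow, map_mul, map_inv, FreeGroup.lift_apply_of, Matrix.cons_val_zero,
      Matrix.cons_val_one, Matrix.head_cons]
  · rw [A_pow]; ext <;> simp
  · rw [B_pow]; ext <;> simp; decide
  · have h1 : (BB : Gr n) * AA = ⟨-1, 3⟩ := by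
      ext <;> simp [AA, BB] <;> decide
    rw [mul_assoc ((BB : Gr n) * AA), h1]
    ext <;> simp <;> decide
  · have h1 : (BB : Gr n)⁻¹ * AA = ⟨-1, 1⟩ := by
      have hB : (BB : Gr n)⁻¹ = ⟨0, 3⟩ := by ext <;> simp [BB] <;> decide
      rw [hB]; ext <;> simp [AA] <;> decide
    rw [mul_assoc ((BB : Gr n)⁻¹ * AA), h1]
    ext <;> simp <;> decide

def φh : V8n n →* Gr n := PresentedGroup.toGroup φrels

@[simp] lemma φ_a : φh (va n) = (AA : Gr n) := by
  unfold φh va; simp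
@[simp] lemma φ_b : φh (vb n) = (BB : Gr n) := by
  unfold φh vb; simp

def ψa (k : ZMod (2*n)) : V8n n := a ^ k.val
def ψb (l : ZMod 4) : V8n n := b ^ l.val

lemma ψa_add (x y : ZMod (2*n)) : (ψa (x + y) : V8n n) = ψa x * ψa y := by
  rw [ψa, ψa, ψa, ZMod.val_add, ← pow_eq_pow_mod _ r1, pow_add]

lemma ψb_add (x y : ZMod 4) : (ψb (x + y) : V8n n) = ψb x * ψb y := by
  rw [ψb, ψb, ψb, ZMod.val_add, ← pow_eq_pow_mod _ r2, pow_add]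

@[simp] lemma ψa_zero : (ψa (0 : ZMod (2*n)) : V8n n) = 1 := by simp [ψa, ZMod.val_zero]
@[simp] lemma ψb_zero : (ψb (0 : ZMod 4) : V8n n) = 1 := by simp [ψb, ZMod.val_zero]

lemma ψa_neg (x : ZMod (2*n)) : (ψa (-x) : V8n n) = (ψa x)⁻¹ := by
  apply eq_inv_of_mul_eq_one_left
  rw [← ψa_add, neg_add_cancel, ψa_zero]

lemma b_cube : (b : V8n n) ^ 3 = b⁻¹ := by
  apply eq_inv_of_mul_eq_one_left
  rw [← pow_succ, r2]

lemma pr_even (k : ZMod (2*n)) (h : k.val % 2 = 0) : pr n k = 0 := by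
  rw [pr_val, ← ZMod.natCast_mod, h, Nat.cast_zero]

lemma pr_odd (k : ZMod (2*n)) (h : k.val % 2 = 1) : pr n k = 1 := by
  rw [pr_val, ← ZMod.natCast_mod, h, Nat.cast_one]

lemma ψb_one : (ψb (1 : ZMod 4) : V8n n) = b := by
  rw [ψb, show ((1 : ZMod 4)).val = 1 from rfl, pow_one]
lemma ψb_two : (ψb (2 : ZMod 4) : V8n n) = b * b := by
  rw [ψb, show ((2 : ZMod 4)).val = 2 from rfl, pow_two]
lemma ψb_three : (ψb (3 : ZMod 4) : V8n n) = b * b * b := by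
  rw [ψb, show ((3 : ZMod 4)).val = 3 from rfl, pow_succ, pow_two]

lemma SWAP (j : ZMod 4) (k : ZMod (2*n)) :
    (ψb j * ψa k : V8n n) = ψa (sg n (p4 j) * k) * ψb (j + em (p4 j * pr n k)) := by
  have hinv : ((a : V8n n) ^ k.val)⁻¹ = ψa (-k) := by rw [ψa_neg]; rfl
  rcases four_cases j with hj|hj|hj|hj <;> subst hj
  · simp
  · rcases Nat.even_or_odd k.val with he | ho
    · have h0 : k.val % 2 = 0 := Nat.even_iff.1 he
      rw [pr_even k h0]
      simp only [p4_one, sg_one, mul_zero, em_zero, add_zero, neg_one_mul]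
      rw [ψb_one, ψa, key, if_pos h0, hinv]
    · have h0 : k.val % 2 = 1 := Nat.odd_iff.1 ho
      rw [pr_odd k h0]
      simp only [p4_one, sg_one, mul_one, em_one, neg_one_mul]
      rw [ψb_one, ψa, key, if_neg (by omega), hinv,
        show (1 + 2 : ZMod 4) = 3 from by decide, ψb_three]
      congr 1
      rw [← b_cube, pow_succ, pow_two]
  · rw [ψb_two, ψa, show p4 (2 : ZMod 4) = 0 from p4_two]
    simp only [sg_zero, one_mul, zero_mul, em_zero, add_zero]
    rw [b2key, ψa, ψb_two]
  · have hcomm : ∀ m : ℕ, (b*b) * ((a:V8n n)^m)⁻¹ = ((a:V8n n)^m)⁻¹ * (b*b) := by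
      intro m
      have hc : Commute (b*b) ((a:V8n n)^m) := b2key m
      exact hc.inv_right
    rcases Nat.even_or_odd k.val with he | ho
    · have h0 : k.val % 2 = 0 := Nat.even_iff.1 he
      rw [pr_even k h0]
      simp only [p4_three, sg_one, mul_zero, em_zero, add_zero, neg_one_mul]
      rw [ψb_three, ψa, mul_assoc, key, if_pos h0, ← mul_assoc, ← mul_assoc, hcomm, hinv]
    · have h0 : k.val % 2 = 1 := Nat.odd_iff.1 ho
      rw [pr_odd k h0]
      simp only [p4_three, sg_one, mul_one, em_one, neg_one_mul]
      rw [show (3 + 2 : ZMod 4) = 1 from by decide, ψb_one, ψb_three, ψa, mul_assoc, key,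
        if_neg (by omega), ← mul_assoc, hcomm, hinv]
      group
def ψf (x : Gr n) : V8n n := ψa x.k * ψb x.l

lemma ψ_mul (x y : Gr n) : (ψf (x * y) : V8n n) = ψf x * ψf y := by
  show ψa (x.k + sg n (p4 x.l) * y.k) * ψb (x.l + y.l + em (p4 x.l * pr n y.k))
      = (ψa x.k * ψb x.l) * (ψa y.k * ψb y.l)
  rw [ψa_add, add_right_comm x.l y.l, ψb_add, mul_assoc (ψa x.k),
    ← mul_assoc (ψa (sg n (p4 x.l) * y.k)), ← SWAP x.l y.k]
  group

def Ψh : Gr n →* V8n n := MonoidHom.mk' ψf ψ_mul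

lemma left_inverse_ψ : ∀ v : V8n n, Ψh (φh v) = v := by
  have hfact : (1 : ℕ) < 2 * n := by have := Nat.pos_of_ne_zero (NeZero.ne n); omega
  have h : (Ψh.comp φh : V8n n →* V8n n) = MonoidHom.id _ := by
    apply PresentedGroup.ext
    intro x
    fin_cases x
    · show Ψh (φh (va n)) = va n
      rw [φ_a]
      show ψa 1 * ψb 0 = va n
      rw [ψb_zero, mul_one, ψa, ZMod.val_one_eq_one_mod]
      simp [Nat.mod_eq_of_lt hfact]
    · show Ψh (φh (vb n)) = vb n
      rw [φ_b]
      show ψa 0 * ψb 1 = vb n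
      rw [ψa_zero, one_mul, ψb_one]
  intro v
  exact DFunLike.congr_fun h v

lemma right_inverse_ψ : ∀ x : Gr n, φh (Ψh x) = x := by
  intro x
  show φh (ψa x.k * ψb x.l) = x
  rw [map_mul, ψa, ψb, map_pow, map_pow, φ_a, φ_b, A_pow, B_pow]
  ext <;> simp [ZMod.natCast_zmod_val]

def eqv : V8n n ≃* Gr n :=
  { toFun := φh, invFun := Ψh, left_inv := left_inverse_ψ, right_inv := right_inverse_ψ,
    map_mul' := φh.map_mul }

def conjEquiv {G H : Type*} [Group G] [Group H] (e : G ≃* H) :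
    ConjClasses G ≃ ConjClasses H :=
  Quotient.congr e.toEquiv (by
    intro x y
    change IsConj x y ↔ IsConj (e x) (e y)
    constructor
    · intro h
      exact e.toMonoidHom.map_isConj h
    · intro h
      have := e.symm.toMonoidHom.map_isConj h
      simpa using this)

lemma card_conj_eq : Nat.card (ConjClasses (V8n n)) = Nat.card (ConjClasses (Gr n)) :=
  Nat.card_congr (conjEquiv eqv)

/-! ### Counting conjugacy classes of `Gr n` -/

abbrev clT (n : ℕ) := ZMod 2 ⊕ (Fin n ⊕ (Fin ((n+1)/2) × ZMod 2))

lemma pr_natCast (m : ℕ) : pr n ((m : ℕ) : ZMod (2*n)) = (m : ZMod 2) := map_natCast _ m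
lemma p4_natCast (m : ℕ) : p4 ((m : ℕ) : ZMod 4) = (m : ZMod 2) := map_natCast _ m
lemma pr_two : pr n (2 : ZMod (2*n)) = 0 := by
  rw [show (2 : ZMod (2*n)) = ((2:ℕ) : ZMod (2*n)) by push_cast; ring, pr_natCast]; decide
lemma pr_neg (k : ZMod (2*n)) : pr n (-k) = pr n k := by rw [map_neg, neg2]
lemma pr_eq_one_iff (k : ZMod (2*n)) : pr n k = 1 ↔ k.val % 2 = 1 := by
  rw [pr_val, ← ZMod.natCast_mod]
  rcases Nat.mod_two_eq_zero_or_one k.val with h | h <;> rw [h] <;> simp <;> decide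
lemma pr_eq_zero_iff (k : ZMod (2*n)) : pr n k = 0 ↔ k.val % 2 = 0 := by
  rw [pr_val, ← ZMod.natCast_mod]
  rcases Nat.mod_two_eq_zero_or_one k.val with h | h <;> rw [h] <;> simp <;> decide
lemma p4_eq_one_iff (l : ZMod 4) : p4 l = 1 ↔ l.val % 2 = 1 := by
  rcases four_cases l with h|h|h|h <;> subst h <;> decide
lemma p4_zero_cases (l : ZMod 4) (h : ¬ p4 l = 1) : l = 0 ∨ l = 2 := by
  rcases four_cases l with h'|h'|h'|h' <;> subst h'
  · exact Or.inl rfl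
  · exact absurd (by decide) h
  · exact Or.inr rfl
  · exact absurd (by decide) h

lemma conjA_even (x : Gr n) (hx : p4 x.l = 0) : AA * x * AA⁻¹ = x := by
  ext <;> simp [AA, hx] <;> ring
lemma conjA_odd (x : Gr n) (hx : p4 x.l = 1) : AA * x * AA⁻¹ = ⟨x.k + 2, x.l + 2⟩ := by
  ext <;> simp [AA, hx] <;> ring_nf <;> try decide
lemma conjB (x : Gr n) : BB * x * BB⁻¹ = ⟨-x.k, x.l + em (pr n x.k)⟩ := by
  ext
  · simp [BB]
  · simp [BB, map_add, p4_em, em_add]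
    rcases two_cases (pr n x.k) with h | h <;> rw [h] <;> ring

lemma conjA_pow (u : ℕ) (x : Gr n) (hx : p4 x.l = 1) :
    AA^u * x * (AA^u)⁻¹ = ⟨x.k + ((2*u : ℕ) : ZMod (2*n)), x.l + ((2*u : ℕ) : ZMod 4)⟩ := by
  induction u with
  | zero => ext <;> simp
  | succ u ih =>
    have hstep : AA^(u+1) * x * (AA^(u+1))⁻¹ = AA * (AA^u * x * (AA^u)⁻¹) * AA⁻¹ := by
      rw [pow_succ']; group
    have hodd : p4 (⟨x.k + ((2*u : ℕ) : ZMod (2*n)), x.l + ((2*u : ℕ) : ZMod 4)⟩ : Gr n).l = 1 := by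
      show p4 (x.l + _) = 1
      rw [map_add, hx, p4_natCast]
      have : ((2*u : ℕ) : ZMod 2) = 0 := by
        rw [ZMod.natCast_eq_zero_iff]; omega
      rw [this, add_zero]
    rw [hstep, ih, conjA_odd _ hodd]
    ext <;> simp <;> push_cast <;> ring

lemma top_gen : Subgroup.closure ({AA, BB} : Set (Gr n)) = ⊤ := by
  rw [eq_top_iff]
  intro x _
  have hx : x = AA^x.k.val * BB^x.l.val := by
    rw [A_pow, B_pow]; ext <;> simp [ZMod.natCast_zmod_val]
  rw [hx]
  exact mul_mem (pow_mem (Subgroup.subset_closure (by simp)) _)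
    (pow_mem (Subgroup.subset_closure (by simp)) _)

lemma min_bound (hn : Odd n) (k : ZMod (2*n)) (hk : k.val % 2 = 0) :
    min k.val (-k).val / 2 < (n+1)/2 := by
  have h2 := ZMod.val_lt k
  have h3 : (-k).val = if k = 0 then 0 else 2*n - k.val := ZMod.neg_val k
  obtain ⟨m, hm⟩ := hn
  by_cases h : k = 0
  · have h0 : k.val = 0 := by rw [h, ZMod.val_zero]
    rw [h3, if_pos h, h0]
    omega
  · rw [h3, if_neg h]
    have h4 : k.val ≠ 0 := fun hc => h (by rw [← ZMod.natCast_zmod_val k, hc, Nat.cast_zero])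
    omega

def cl (hn : Odd n) (x : Gr n) : clT n :=
  if p4 x.l = 1 then Sum.inl (pr n x.k)
  else if hk : pr n x.k = 1 then
    Sum.inr (Sum.inl ⟨(if x.l = 0 then x.k else -x.k).val / 2, by
      have := ZMod.val_lt (if x.l = 0 then x.k else -x.k); omega⟩)
  else Sum.inr (Sum.inr (⟨min x.k.val (-x.k).val / 2,
      min_bound hn x.k (by
        rcases two_cases (pr n x.k) with h | h
        · exact (pr_eq_zero_iff x.k).1 h
        · exact absurd h hk)⟩,
    ((x.l.val / 2 : ℕ) : ZMod 2)))

lemma p4_eq_zero_iff (l : ZMod 4) : p4 l = 0 ↔ l.val % 2 = 0 := by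
  rcases four_cases l with h|h|h|h <;> subst h <;> decide

lemma cl_conjA (hn : Odd n) (x : Gr n) : cl hn (AA * x * AA⁻¹) = cl hn x := by
  by_cases h : p4 x.l = 1
  · rw [conjA_odd x h]
    have h1 : p4 ((⟨x.k + 2, x.l + 2⟩ : Gr n).l) = 1 := by
      show p4 (x.l + 2) = 1
      rw [map_add, h, p4_two, add_zero]
    simp only [cl, h1, h, if_pos]
    show Sum.inl (pr n (x.k + 2)) = _
    rw [map_add, pr_two, add_zero]
  · rw [conjA_even x (by rcases two_cases (p4 x.l) with h'|h'; exact h'; exact absurd h' h)]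

lemma cl_conjB (hn : Odd n) (x : Gr n) : cl hn (BB * x * BB⁻¹) = cl hn x := by
  rw [conjB]
  by_cases h : p4 x.l = 1
  · have h1 : p4 ((⟨-x.k, x.l + em (pr n x.k)⟩ : Gr n).l) = 1 := by
      show p4 (x.l + em (pr n x.k)) = 1
      rw [map_add, h, p4_em, add_zero]
    simp only [cl, h1, h, if_pos]
    show Sum.inl (pr n (-x.k)) = _
    rw [pr_neg]
  · by_cases hk : pr n x.k = 1
    · rw [show em (pr n x.k) = 2 by rw [hk]; decide]
      have h1 : ¬ p4 ((⟨-x.k, x.l + 2⟩ : Gr n).l) = 1 := by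
        show ¬ p4 (x.l + 2) = 1
        rwa [map_add, p4_two, add_zero]
      have h2 : pr n ((⟨-x.k, x.l + 2⟩ : Gr n).k) = 1 := by
        show pr n (-x.k) = 1
        rwa [pr_neg]
      simp only [cl, h1, h, hk, h2, if_neg, dif_pos, not_false_iff]
      simp only [Sum.inr.injEq, Sum.inl.injEq, Fin.mk.injEq]
      rcases p4_zero_cases x.l h with h0 | h0 <;> rw [h0]
      · rw [show ((0 : ZMod 4) + 2 = 2) from by decide]
        simp [show ((2:ZMod 4)) ≠ 0 from by decide, neg_neg]
      · rw [show ((2 : ZMod 4) + 2 = 0) from by decide]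
        simp [show ((2:ZMod 4)) ≠ 0 from by decide]
    · rw [show em (pr n x.k) = 0 by
        rcases two_cases (pr n x.k) with h'|h'; rw [h']; rfl; exact absurd h' hk, add_zero]
      have h1 : ¬ p4 ((⟨-x.k, x.l⟩ : Gr n).l) = 1 := h
      have h2 : ¬ pr n ((⟨-x.k, x.l⟩ : Gr n).k) = 1 := by
        show ¬ pr n (-x.k) = 1
        rwa [pr_neg]
      simp only [cl, h1, h, hk, h2, if_neg, dif_neg, not_false_iff]
      simp only [Sum.inr.injEq, Prod.mk.injEq, Fin.mk.injEq]
      exact ⟨by rw [neg_neg, min_comm], trivial⟩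

lemma cl_conj (hn : Odd n) (g x : Gr n) : cl hn (g * x * g⁻¹) = cl hn x := by
  have key : ∀ g ∈ Subgroup.closure ({AA, BB} : Set (Gr n)), ∀ x, cl hn (g*x*g⁻¹) = cl hn x := by
    intro g hg
    induction hg using Subgroup.closure_induction with
    | mem g hg =>
      simp only [Set.mem_insert_iff, Set.mem_singleton_iff] at hg
      rcases hg with rfl | rfl
      · exact cl_conjA hn
      · exact cl_conjB hn
    | one => intro x; simp
    | mul g h hg hh ihg ihh =>
      intro x
      rw [show g*h*x*(g*h)⁻¹ = g*(h*x*h⁻¹)*g⁻¹ by group, ihg, ihh]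
    | inv g hg ihg =>
      intro x
      have h2 := ihg (g⁻¹ * x * g)
      rw [show g * (g⁻¹*x*g) * g⁻¹ = x by group] at h2
      rw [inv_inv]
      exact h2.symm
  exact key g (by rw [top_gen]; trivial) x

def rep : clT n → Gr n
  | .inl p => ⟨((p.val : ℕ) : ZMod (2*n)), 1⟩
  | .inr (.inl i) => ⟨((2*i.val+1 : ℕ) : ZMod (2*n)), 0⟩
  | .inr (.inr (i, m)) => ⟨((2*i.val : ℕ) : ZMod (2*n)), ((2*m.val : ℕ) : ZMod 4)⟩

lemma cl_rep (hn : Odd n) (t : clT n) : cl hn (rep t) = t := by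
  obtain ⟨s, hs⟩ := hn
  rcases t with p | i | ⟨i, m⟩
  · show cl _ ⟨((p.val : ℕ) : ZMod (2*n)), 1⟩ = _
    simp only [cl]
    rw [if_pos (by exact p4_one)]
    rw [pr_natCast, ZMod.natCast_zmod_val]
  · show cl _ ⟨((2*i.val+1 : ℕ) : ZMod (2*n)), 0⟩ = _
    have hval : ((2*i.val+1 : ℕ) : ZMod (2*n)).val = 2*i.val+1 :=
      ZMod.val_cast_of_lt (by have := i.isLt; omega)
    have c2 : pr n ((2*i.val+1 : ℕ) : ZMod (2*n)) = 1 := by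
      rw [pr_eq_one_iff, hval]; omega
    simp only [cl]
    rw [if_neg (by decide), dif_pos c2]
    simp only [Sum.inr.injEq, Sum.inl.injEq, Fin.ext_iff, if_true]
    rw [hval]
    omega
  · show cl _ ⟨((2*i.val : ℕ) : ZMod (2*n)), ((2*m.val : ℕ) : ZMod 4)⟩ = _
    have hi := i.isLt
    have hm : m.val < 2 := ZMod.val_lt m
    have hval : ((2*i.val : ℕ) : ZMod (2*n)).val = 2*i.val :=
      ZMod.val_cast_of_lt (by omega)
    have hvall : ((2*m.val : ℕ) : ZMod 4).val = 2*m.val :=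
      ZMod.val_cast_of_lt (by omega)
    have c1 : ¬ p4 ((2*m.val : ℕ) : ZMod 4) = 1 := by
      rw [p4_eq_one_iff, hvall]; omega
    have c2 : ¬ pr n ((2*i.val : ℕ) : ZMod (2*n)) = 1 := by
      rw [pr_eq_one_iff, hval]; omega
    simp only [cl]
    rw [if_neg c1, dif_neg c2]
    simp only [Sum.inr.injEq, Prod.mk.injEq, Fin.ext_iff]
    constructor
    · show min _ (-((2*i.val : ℕ) : ZMod (2*n))).val / 2 = i.val
      have hneg := ZMod.neg_val ((2*i.val : ℕ) : ZMod (2*n))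
      by_cases h0 : ((2*i.val : ℕ) : ZMod (2*n)) = 0
      · have hz : 2*i.val = 0 := by rw [← hval, h0, ZMod.val_zero]
        rw [hneg, if_pos h0, hval]
        omega
      · rw [hneg, if_neg h0, hval]
        have hnz : 2*i.val ≠ 0 := fun hc => h0 (by rw [hc, Nat.cast_zero])
        omega
    · show ((((2*m.val : ℕ) : ZMod 4).val / 2 : ℕ) : ZMod 2) = m
      rw [hvall, show (2*m.val)/2 = m.val by omega, ZMod.natCast_zmod_val]

lemma isConj_rep (hn : Odd n) (x : Gr n) : IsConj x (rep (cl hn x)) := by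
  obtain ⟨s, hs⟩ := id hn
  by_cases h : p4 x.l = 1
  · -- odd l : conjugate by AA^u
    have hrep : rep (cl hn x) = ⟨(((pr n x.k).val : ℕ) : ZMod (2*n)), 1⟩ := by
      simp only [cl, if_pos h, rep]
    set d := ((((pr n x.k).val : ℕ) : ZMod (2*n)) - x.k).val with hd
    set e := ((1 : ZMod 4) - x.l).val with he
    have hdeven : d % 2 = 0 := by
      rw [hd, ← pr_eq_zero_iff, map_sub, pr_natCast,
        show ((pr n x.k).val : ZMod 2) = pr n x.k from ZMod.natCast_zmod_val _, sub_self]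
    have heeven : e % 2 = 0 := by
      have : p4 ((1 : ZMod 4) - x.l) = 0 := by
        rw [map_sub, map_one]
        rcases two_cases (p4 x.l) with h'|h'
        · exact absurd h' (by rw [h]; decide)
        · rw [h']; decide
      rw [p4_eq_zero_iff] at this
      exact this
    have he4 : e < 4 := ZMod.val_lt _
    set u := d/2 + n * ((d/2 + e/2) % 2) with hu
    have hu1 : (2*u : ℕ) = d + (2*n)*((d/2 + e/2) % 2) := by
      rcases Nat.mod_two_eq_zero_or_one (d/2 + e/2) with ht | ht <;> rw [hu, ht] <;> omega
    have hcast1 : ((2*u : ℕ) : ZMod (2*n)) = ((d : ℕ) : ZMod (2*n)) := by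
      rw [hu1, Nat.cast_add, Nat.cast_mul, ZMod.natCast_self, zero_mul, add_zero]
    have hu2 : (2*u) % 4 = e % 4 := by
      rcases Nat.mod_two_eq_zero_or_one (d/2 + e/2) with ht | ht <;> rw [hu, ht] <;> omega
    have hcast2 : ((2*u : ℕ) : ZMod 4) = ((e : ℕ) : ZMod 4) := by
      rw [← ZMod.natCast_mod, hu2, ZMod.natCast_mod]
    rw [isConj_iff]
    refine ⟨AA^u, ?_⟩
    rw [conjA_pow u x h, hrep, hcast1, hcast2]
    ext
    · show x.k + ((d:ℕ) : ZMod (2*n)) = _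
      rw [hd, ZMod.natCast_zmod_val]
      ring
    · show x.l + ((e:ℕ) : ZMod 4) = 1
      rw [he, ZMod.natCast_zmod_val]
      ring
  · by_cases hk : pr n x.k = 1
    · have hkodd : x.k.val % 2 = 1 := (pr_eq_one_iff _).1 hk
      rcases p4_zero_cases x.l h with h0 | h0
      · have : rep (cl hn x) = x := by
          simp only [cl, if_neg h, dif_pos hk, rep, if_pos h0]
          ext
          · show ((2*(x.k.val/2)+1 : ℕ) : ZMod (2*n)) = x.k
            rw [show 2*(x.k.val/2)+1 = x.k.val by omega, ZMod.natCast_zmod_val]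
          · exact h0.symm
        rw [this]
      · have hnegodd : (-x.k).val % 2 = 1 := by
          rw [← pr_eq_one_iff, pr_neg]; exact hk
        have hrep : rep (cl hn x) = ⟨-x.k, 0⟩ := by
          simp only [cl, if_neg h, dif_pos hk, rep,
            if_neg (by rw [h0]; decide : ¬ x.l = 0)]
          ext
          · show ((2*((-x.k).val/2)+1 : ℕ) : ZMod (2*n)) = -x.k
            rw [show 2*((-x.k).val/2)+1 = (-x.k).val by omega, ZMod.natCast_zmod_val]
          · rfl
        rw [isConj_iff, hrep]
        refine ⟨BB, ?_⟩
        rw [conjB, hk]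
        ext
        · rfl
        · show x.l + em 1 = 0
          rw [h0]; decide
    · have hkeven : x.k.val % 2 = 0 := by
        rcases two_cases (pr n x.k) with h'|h'
        · exact (pr_eq_zero_iff _).1 h'
        · exact absurd h' hk
      have hleven : x.l = 0 ∨ x.l = 2 := p4_zero_cases x.l h
      have hlval : 2*(x.l.val/2) = x.l.val := by
        rcases hleven with h0|h0 <;> rw [h0] <;> decide
      rcases le_or_gt x.k.val (-x.k).val with hle | hlt
      · have : rep (cl hn x) = x := by
          simp only [cl, if_neg h, dif_neg hk, rep]
          ext
          · show ((2*(min x.k.val (-x.k).val / 2) : ℕ) : ZMod (2*n)) = x.k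
            rw [min_eq_left hle, show 2*(x.k.val/2) = x.k.val by omega,
              ZMod.natCast_zmod_val]
          · show ((2*(((x.l.val/2 : ℕ) : ZMod 2)).val : ℕ) : ZMod 4) = x.l
            rw [ZMod.val_natCast_of_lt (by rcases hleven with h0|h0 <;> rw [h0] <;> decide),
              hlval, ZMod.natCast_zmod_val]
        rw [this]
      · have hnegeven : (-x.k).val % 2 = 0 := by
          rw [← pr_eq_zero_iff, pr_neg, pr_eq_zero_iff]; exact hkeven
        have hrep : rep (cl hn x) = ⟨-x.k, x.l⟩ := by
          simp only [cl, if_neg h, dif_neg hk, rep]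
          ext
          · show ((2*(min x.k.val (-x.k).val / 2) : ℕ) : ZMod (2*n)) = -x.k
            rw [min_eq_right (le_of_lt hlt), show 2*((-x.k).val/2) = (-x.k).val by omega,
              ZMod.natCast_zmod_val]
          · show ((2*(((x.l.val/2 : ℕ) : ZMod 2)).val : ℕ) : ZMod 4) = x.l
            rw [ZMod.val_natCast_of_lt (by rcases hleven with h0|h0 <;> rw [h0] <;> decide),
              hlval, ZMod.natCast_zmod_val]
        rw [isConj_iff, hrep]
        refine ⟨BB, ?_⟩
        rw [conjB, show em (pr n x.k) = 0 by
          rcases two_cases (pr n x.k) with h'|h'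
          · rw [h']; rfl
          · exact absurd h' hk]
        ext
        · rfl
        · show x.l + 0 = x.l
          rw [add_zero]

def classEquiv (hn : Odd n) : ConjClasses (Gr n) ≃ clT n where
  toFun := Quotient.lift (cl hn) (fun x y (hxy : IsConj x y) => by
    obtain ⟨c, hc⟩ := isConj_iff.1 hxy
    rw [← hc]
    exact (cl_conj hn c x).symm)
  invFun t := ConjClasses.mk (rep t)
  left_inv := by
    intro q
    obtain ⟨x⟩ := q
    show ConjClasses.mk (rep (cl hn x)) = ConjClasses.mk x
    rw [ConjClasses.mk_eq_mk_iff_isConj]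
    exact (isConj_rep hn x).symm
  right_inv t := cl_rep hn t

lemma card_clT (hn : Odd n) : Nat.card (clT n) = 2*n + 3 := by
  obtain ⟨s, hs⟩ := hn
  rw [show clT n = (ZMod 2 ⊕ (Fin n ⊕ (Fin ((n+1)/2) × ZMod 2))) from rfl,
    Nat.card_sum, Nat.card_sum, Nat.card_prod, Nat.card_zmod,
    Nat.card_eq_fintype_card, Nat.card_eq_fintype_card, Fintype.card_fin, Fintype.card_fin]
  omega

lemma card_conj_gr (hn : Odd n) : Nat.card (ConjClasses (Gr n)) = 2*n + 3 := by
  rw [Nat.card_congr (classEquiv hn), card_clT hn]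

end iso

end V8

theorem stmt_4 (n : ℕ) (hn : Odd n) :
    Nat.card (ConjClasses (V8n n)) = 2 * n + 3 := by
  haveI : NeZero n := ⟨by rintro rfl; exact absurd hn (by decide)⟩
  rw [V8.card_conj_eq, V8.card_conj_gr hn]
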